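/- Let X and Y be distinct Vamos pairs such that X ∪ Y is independent in the Vamos matroid (i.e., {X, Y} = {A, D}), and suppose the dealer is not a member of X. Then for any perfect secret sharing scheme, 2 ≤ h(Y|X). -/

import Mathlib

open MeasureTheory Finset

/-- Shannon entropy of a random variable with values in a finite type:
`H(f) = ∑ₐ −P(f = a)·log P(f = a)`. -/
noncomputable def shannonEntropy {Ω : Type} [MeasurableSpace Ω] {α : Type} [Fintype α]
    (μ : Measure Ω) (f : Ω → α) : ℝ :=
  ∑ a : α, Real.negMulLog ((μ (f ⁻¹' {a})).toReal)

lemma negMulLog_add_le' {x y : ℝ} (hx : 0 ≤ x) (hy : 0 ≤ y) :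
    Real.negMulLog (x + y) ≤ Real.negMulLog x + Real.negMulLog y := by
  rcases eq_or_lt_of_le hx with h | hx'
  · simp [← h]
  rcases eq_or_lt_of_le hy with h | hy'
  · simp [← h]
  have hxy : (0:ℝ) < x + y := by linarith
  simp only [Real.negMulLog, neg_mul]
  have h1 : x * Real.log x ≤ x * Real.log (x + y) :=
    mul_le_mul_of_nonneg_left (Real.log_le_log hx' (by linarith)) hx
  have h2 : y * Real.log y ≤ y * Real.log (x + y) :=
    mul_le_mul_of_nonneg_left (Real.log_le_log hy' (by linarith)) hy
  nlinarith [h1, h2]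

lemma negMulLog_sum_le {ι : Type*} (s : Finset ι) (p : ι → ℝ) (hp : ∀ i ∈ s, 0 ≤ p i) :
    Real.negMulLog (∑ i ∈ s, p i) ≤ ∑ i ∈ s, Real.negMulLog (p i) := by
  classical
  induction s using Finset.induction_on with
  | empty => simp
  | insert a t hni ih =>
    rw [Finset.sum_insert hni, Finset.sum_insert hni]
    calc Real.negMulLog (p a + ∑ i ∈ t, p i)
        ≤ Real.negMulLog (p a) + Real.negMulLog (∑ i ∈ t, p i) :=
          negMulLog_add_le' (hp a (Finset.mem_insert_self a t))
            (Finset.sum_nonneg fun i hi => hp i (Finset.mem_insert_of_mem hi))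
      _ ≤ _ := by
          have := ih (fun i hi => hp i (Finset.mem_insert_of_mem hi))
          linarith

section MeasureLemmas
variable {Ω : Type} [MeasurableSpace Ω] (μ : Measure Ω) [IsProbabilityMeasure μ]
variable {α β : Type} [Fintype α] [Fintype β]

lemma sum_toReal_measure_preimage (f : Ω → α)
    (hf : ∀ s : Set α, MeasurableSet (f ⁻¹' s)) :
    ∑ a : α, (μ (f ⁻¹' {a})).toReal = 1 := by
  classical
  have hdisj : Pairwise (Function.onFun Disjoint fun a : α => f ⁻¹' {a}) := by
    intro a b hab
    simp only [Function.onFun, Set.disjoint_left]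
    rintro ω h1 h2
    exact hab (by simp_all)
  have hunion : (⋃ a : α, f ⁻¹' {a}) = Set.univ := by
    ext ω; simp
  have := measure_iUnion (μ := μ) hdisj (fun a => hf {a})
  rw [hunion, measure_univ, tsum_fintype] at this
  rw [← ENNReal.toReal_sum (fun a _ => measure_ne_top μ _), ← this]
  simp

lemma toReal_measure_preimage_marginal (f : Ω → α) (g : Ω → β)
    (hf : ∀ s : Set α, MeasurableSet (f ⁻¹' s))
    (hg : ∀ s : Set β, MeasurableSet (g ⁻¹' s)) (a : α) :
    (μ (f ⁻¹' {a})).toReal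
      = ∑ b : β, (μ ((fun ω => (f ω, g ω)) ⁻¹' {(a, b)})).toReal := by
  classical
  have hset : ∀ b : β, (fun ω => (f ω, g ω)) ⁻¹' {(a, b)} = f ⁻¹' {a} ∩ g ⁻¹' {b} := by
    intro b; ext ω; simp [Prod.ext_iff]
  have hdisj : Pairwise (Function.onFun Disjoint fun b : β => f ⁻¹' {a} ∩ g ⁻¹' {b}) := by
    intro b c hbc
    simp only [Function.onFun, Set.disjoint_left]
    rintro ω ⟨_, h1⟩ ⟨_, h2⟩
    exact hbc (by simp_all)
  have hunion : (⋃ b : β, f ⁻¹' {a} ∩ g ⁻¹' {b}) = f ⁻¹' {a} := by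
    ext ω; simp
  have hmeas : ∀ b : β, MeasurableSet (f ⁻¹' {a} ∩ g ⁻¹' {b}) :=
    fun b => (hf {a}).inter (hg {b})
  have := measure_iUnion (μ := μ) hdisj hmeas
  rw [hunion, tsum_fintype] at this
  rw [this, ENNReal.toReal_sum (fun b _ => measure_ne_top μ _)]
  exact Finset.sum_congr rfl fun b _ => by rw [hset b]

lemma shannonEntropy_comp_le (f : Ω → α) (φ : α → β)
    (hf : ∀ s : Set α, MeasurableSet (f ⁻¹' s)) :
    shannonEntropy μ (fun ω => φ (f ω)) ≤ shannonEntropy μ f := by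
  classical
  unfold shannonEntropy
  have key : ∀ b : β, (μ ((fun ω => φ (f ω)) ⁻¹' {b})).toReal
      = ∑ a ∈ Finset.univ.filter (fun a => φ a = b), (μ (f ⁻¹' {a})).toReal := by
    intro b
    have hunion : ((fun ω => φ (f ω)) ⁻¹' {b})
        = ⋃ a ∈ Finset.univ.filter (fun a => φ a = b), f ⁻¹' {a} := by
      ext ω; simp
    rw [hunion]
    rw [measure_biUnion_finset ?_ (fun a _ => hf {a})]
    · rw [ENNReal.toReal_sum (fun a _ => measure_ne_top μ _)]
    · intro a ha a' ha' haa'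
      simp only [Set.disjoint_left]
      rintro ω h1 h2
      exact haa' (by simp_all)
  calc ∑ b : β, Real.negMulLog ((μ ((fun ω => φ (f ω)) ⁻¹' {b})).toReal)
      = ∑ b : β, Real.negMulLog (∑ a ∈ Finset.univ.filter (fun a => φ a = b),
          (μ (f ⁻¹' {a})).toReal) := by
        exact Finset.sum_congr rfl fun b _ => by rw [key b]
    _ ≤ ∑ b : β, ∑ a ∈ Finset.univ.filter (fun a => φ a = b),
          Real.negMulLog ((μ (f ⁻¹' {a})).toReal) :=
        Finset.sum_le_sum fun b _ => negMulLog_sum_le _ _ fun a _ => ENNReal.toReal_nonneg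
    _ = ∑ a : α, Real.negMulLog ((μ (f ⁻¹' {a})).toReal) := by
        exact Finset.sum_fiberwise _ _ _

end MeasureLemmas

section SubmodCore
variable {α β γ : Type} [Fintype α] [Fintype β] [Fintype γ]

lemma submod_core (P : α → β → γ → ℝ) (hP : ∀ a b c, 0 ≤ P a b c)
    (hsum : ∑ a, ∑ b, ∑ c, P a b c = 1) :
    (∑ a, ∑ b, ∑ c, Real.negMulLog (P a b c)) + (∑ a, Real.negMulLog (∑ b, ∑ c, P a b c))
      ≤ (∑ a, ∑ b, Real.negMulLog (∑ c, P a b c))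
        + (∑ a, ∑ c, Real.negMulLog (∑ b, P a b c)) := by
  classical
  set pa : α → ℝ := fun a => ∑ b, ∑ c, P a b c with hpa
  set pab : α → β → ℝ := fun a b => ∑ c, P a b c with hpab
  set pac : α → γ → ℝ := fun a c => ∑ b, P a b c with hpac
  have hpa0 : ∀ a, 0 ≤ pa a := fun a =>
    Finset.sum_nonneg fun b _ => Finset.sum_nonneg fun c _ => hP a b c
  have hpab0 : ∀ a b, 0 ≤ pab a b := fun a b => Finset.sum_nonneg fun c _ => hP a b c
  have hpac0 : ∀ a c, 0 ≤ pac a c := fun a c => Finset.sum_nonneg fun b _ => hP a b c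
  set T : α → β → γ → ℝ := fun a b c =>
    P a b c * Real.log (P a b c) + P a b c * Real.log (pa a)
      - P a b c * Real.log (pab a b) - P a b c * Real.log (pac a c) with hT
  set R : α → β → γ → ℝ := fun a b c =>
    if pa a = 0 then 0 else pab a b * pac a c / pa a with hR
  -- pointwise bound
  have hTR : ∀ a b c, P a b c - R a b c ≤ T a b c := by
    intro a b c
    rcases eq_or_lt_of_le (hP a b c) with h0 | hpos
    · have hR0 : 0 ≤ R a b c := by
        by_cases h : pa a = 0
        · simp [hR, h]
        · simp only [hR, if_neg h]
          exact div_nonneg (mul_nonneg (hpab0 a b) (hpac0 a c)) (hpa0 a)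
      simp only [hT, ← h0]
      simp only [zero_mul, mul_zero]  -- P = 0 case
      nlinarith [hR0]
    · -- P > 0
      have hpaP : P a b c ≤ pa a := by
        have h1 : P a b c ≤ ∑ c', P a b c' :=
          Finset.single_le_sum (fun c' _ => hP a b c') (Finset.mem_univ c)
        have h2 : (∑ c', P a b c') ≤ ∑ b', ∑ c', P a b' c' :=
          Finset.single_le_sum (fun b' _ => Finset.sum_nonneg fun c' _ => hP a b' c')
            (Finset.mem_univ b)
        linarith
      have hpabP : P a b c ≤ pab a b :=
        Finset.single_le_sum (fun c' _ => hP a b c') (Finset.mem_univ c)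
      have hpacP : P a b c ≤ pac a c :=
        Finset.single_le_sum (fun b' _ => hP a b' c) (Finset.mem_univ b)
      have hpa_pos : 0 < pa a := lt_of_lt_of_le hpos hpaP
      have hpab_pos : 0 < pab a b := lt_of_lt_of_le hpos hpabP
      have hpac_pos : 0 < pac a c := lt_of_lt_of_le hpos hpacP
      have hpa_ne : pa a ≠ 0 := ne_of_gt hpa_pos
      have hRval : R a b c = pab a b * pac a c / pa a := by simp [hR, hpa_ne]
      set u : ℝ := pab a b * pac a c / (P a b c * pa a) with hu
      have hu_pos : 0 < u := by positivity
      have hlog : Real.log u ≤ u - 1 := Real.log_le_sub_one_of_pos hu_pos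
      have hlogu : Real.log u = Real.log (pab a b) + Real.log (pac a c)
          - Real.log (P a b c) - Real.log (pa a) := by
        rw [hu, Real.log_div (by positivity) (by positivity),
          Real.log_mul (ne_of_gt hpab_pos) (ne_of_gt hpac_pos),
          Real.log_mul (ne_of_gt hpos) (ne_of_gt hpa_pos)]
        ring
      have hPu : P a b c * u = pab a b * pac a c / pa a := by
        rw [hu]; field_simp
      have h1 : P a b c * Real.log u ≤ P a b c * (u - 1) :=
        mul_le_mul_of_nonneg_left hlog (le_of_lt hpos)
      have hTeq : T a b c = -(P a b c * Real.log u) := by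
        rw [hlogu]; simp only [hT]; ring
      rw [hTeq, hRval]
      nlinarith [h1, hPu]
  -- sum of R ≤ 1
  have hRsum : ∑ a, ∑ b, ∑ c, R a b c ≤ 1 := by
    have : ∀ a, ∑ b, ∑ c, R a b c ≤ pa a := by
      intro a
      by_cases h : pa a = 0
      · simp [hR, h, hpa0 a]
      · have : ∑ b, ∑ c, R a b c = (∑ b, pab a b) * (∑ c, pac a c) / pa a := by
          simp only [hR, if_neg h]
          rw [Finset.sum_mul, Finset.sum_div]
          refine Finset.sum_congr rfl fun b _ => ?_
          rw [Finset.mul_sum, Finset.sum_div]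
        rw [this]
        have hb : (∑ b, pab a b) = pa a := rfl
        have hc : (∑ c, pac a c) = pa a := by
          simp only [hpac, hpa]
          exact Finset.sum_comm
        rw [hb, hc]
        rw [div_le_iff₀ (lt_of_le_of_ne (hpa0 a) (Ne.symm h))]
    calc ∑ a, ∑ b, ∑ c, R a b c ≤ ∑ a, pa a := Finset.sum_le_sum fun a _ => this a
      _ = 1 := hsum
  -- sum of T ≥ 0
  have hTsum : 0 ≤ ∑ a, ∑ b, ∑ c, T a b c := by
    have h1 : ∑ a, ∑ b, ∑ c, (P a b c - R a b c) ≤ ∑ a, ∑ b, ∑ c, T a b c :=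
      Finset.sum_le_sum fun a _ => Finset.sum_le_sum fun b _ =>
        Finset.sum_le_sum fun c _ => hTR a b c
    have h2 : ∑ a, ∑ b, ∑ c, (P a b c - R a b c)
        = 1 - ∑ a, ∑ b, ∑ c, R a b c := by
      simp only [Finset.sum_sub_distrib]
      rw [hsum]
    linarith
  -- rewrite entropies and conclude
  have h12 : ∑ a, ∑ b, ∑ c, P a b c * Real.log (pab a b)
      = ∑ a, ∑ b, pab a b * Real.log (pab a b) :=
    Finset.sum_congr rfl fun a _ => Finset.sum_congr rfl fun b _ => by
      rw [hpab, ← Finset.sum_mul]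
  have h13 : ∑ a, ∑ b, ∑ c, P a b c * Real.log (pac a c)
      = ∑ a, ∑ c, pac a c * Real.log (pac a c) := by
    refine Finset.sum_congr rfl fun a _ => ?_
    rw [Finset.sum_comm]
    refine Finset.sum_congr rfl fun c _ => ?_
    rw [hpac, ← Finset.sum_mul]
  have h1 : ∑ a, ∑ b, ∑ c, P a b c * Real.log (pa a)
      = ∑ a, pa a * Real.log (pa a) := by
    refine Finset.sum_congr rfl fun a _ => ?_
    rw [hpa]
    simp only [← Finset.sum_mul]
  have hTexpand : ∑ a, ∑ b, ∑ c, T a b c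
      = (∑ a, ∑ b, ∑ c, P a b c * Real.log (P a b c))
        + (∑ a, ∑ b, ∑ c, P a b c * Real.log (pa a))
        - (∑ a, ∑ b, ∑ c, P a b c * Real.log (pab a b))
        - (∑ a, ∑ b, ∑ c, P a b c * Real.log (pac a c)) := by
    simp only [hT, Finset.sum_sub_distrib, Finset.sum_add_distrib]
  simp only [Real.negMulLog, neg_mul, Finset.sum_neg_distrib]
  linarith [hTsum, hTexpand, h12, h13, h1]

end SubmodCore

section EntropySub
variable {Ω : Type} [MeasurableSpace Ω] (μ : Measure Ω) [IsProbabilityMeasure μ]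
variable {α β γ : Type} [Fintype α] [Fintype β] [Fintype γ]

lemma meas_all {δ : Type} [Fintype δ] (u : Ω → δ)
    (h : ∀ d : δ, MeasurableSet (u ⁻¹' {d})) : ∀ s : Set δ, MeasurableSet (u ⁻¹' s) := by
  intro s
  have : u ⁻¹' s = ⋃ d ∈ s, u ⁻¹' {d} := by ext ω; simp
  rw [this]
  exact MeasurableSet.biUnion s.to_countable fun d _ => h d

lemma meas_pair {δ ε : Type} (u : Ω → δ) (v : Ω → ε)
    (hu : ∀ s : Set δ, MeasurableSet (u ⁻¹' s))
    (hv : ∀ s : Set ε, MeasurableSet (v ⁻¹' s)) (x : δ × ε) :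
    MeasurableSet ((fun ω => (u ω, v ω)) ⁻¹' {x}) := by
  have : (fun ω => (u ω, v ω)) ⁻¹' {x} = u ⁻¹' {x.1} ∩ v ⁻¹' {x.2} := by
    ext ω; simp [Prod.ext_iff]
  rw [this]
  exact (hu _).inter (hv _)

lemma meas_pair' {δ ε : Type} [Fintype δ] [Fintype ε] (u : Ω → δ) (v : Ω → ε)
    (hu : ∀ s : Set δ, MeasurableSet (u ⁻¹' s))
    (hv : ∀ s : Set ε, MeasurableSet (v ⁻¹' s)) :
    ∀ s : Set (δ × ε), MeasurableSet ((fun ω => (u ω, v ω)) ⁻¹' s) :=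
  meas_all _ (meas_pair u v hu hv)

lemma shannonEntropy_submodular (f : Ω → α) (g : Ω → β) (k : Ω → γ)
    (hf : ∀ s : Set α, MeasurableSet (f ⁻¹' s))
    (hg : ∀ s : Set β, MeasurableSet (g ⁻¹' s))
    (hk : ∀ s : Set γ, MeasurableSet (k ⁻¹' s)) :
    shannonEntropy μ (fun ω => (f ω, g ω, k ω)) + shannonEntropy μ f
      ≤ shannonEntropy μ (fun ω => (f ω, g ω)) + shannonEntropy μ (fun ω => (f ω, k ω)) := by
  classical
  set t : Ω → α × β × γ := fun ω => (f ω, g ω, k ω) with ht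
  set P : α → β → γ → ℝ := fun a b c => (μ (t ⁻¹' {(a, b, c)})).toReal with hP
  have htm : ∀ s : Set (α × β × γ), MeasurableSet (t ⁻¹' s) :=
    meas_pair' f (fun ω => (g ω, k ω)) hf (meas_pair' g k hg hk)
  have hP0 : ∀ a b c, 0 ≤ P a b c := fun a b c => ENNReal.toReal_nonneg
  have hPsum : ∑ a, ∑ b, ∑ c, P a b c = 1 := by
    have := sum_toReal_measure_preimage μ t htm
    rw [Fintype.sum_prod_type] at this
    simpa [Fintype.sum_prod_type] using this
  have e123 : shannonEntropy μ t = ∑ a, ∑ b, ∑ c, Real.negMulLog (P a b c) := by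
    unfold shannonEntropy
    rw [Fintype.sum_prod_type]
    exact Finset.sum_congr rfl fun a _ => by rw [Fintype.sum_prod_type]
  have e1 : shannonEntropy μ f = ∑ a, Real.negMulLog (∑ b, ∑ c, P a b c) := by
    unfold shannonEntropy
    refine Finset.sum_congr rfl fun a _ => ?_
    rw [toReal_measure_preimage_marginal μ f (fun ω => (g ω, k ω)) hf
      (meas_pair' g k hg hk) a]
    rw [Fintype.sum_prod_type]
  have e12 : shannonEntropy μ (fun ω => (f ω, g ω))
      = ∑ a, ∑ b, Real.negMulLog (∑ c, P a b c) := by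
    unfold shannonEntropy
    rw [Fintype.sum_prod_type]
    refine Finset.sum_congr rfl fun a _ => Finset.sum_congr rfl fun b _ => ?_
    rw [toReal_measure_preimage_marginal μ (fun ω => (f ω, g ω)) k
      (meas_pair' f g hf hg) hk (a, b)]
    refine congrArg Real.negMulLog (Finset.sum_congr rfl fun c _ => ?_)
    have : (fun ω => ((f ω, g ω), k ω)) ⁻¹' {((a, b), c)} = t ⁻¹' {(a, b, c)} := by
      ext ω; simp [ht, Prod.ext_iff, and_assoc]
    rw [this]
  have e13 : shannonEntropy μ (fun ω => (f ω, k ω))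
      = ∑ a, ∑ c, Real.negMulLog (∑ b, P a b c) := by
    unfold shannonEntropy
    rw [Fintype.sum_prod_type]
    refine Finset.sum_congr rfl fun a _ => Finset.sum_congr rfl fun c _ => ?_
    rw [toReal_measure_preimage_marginal μ (fun ω => (f ω, k ω)) g
      (meas_pair' f k hf hk) hg (a, c)]
    refine congrArg Real.negMulLog (Finset.sum_congr rfl fun b _ => ?_)
    have : (fun ω => ((f ω, k ω), g ω)) ⁻¹' {((a, c), b)} = t ⁻¹' {(a, b, c)} := by
      ext ω
      simp only [Set.mem_preimage, Set.mem_singleton_iff, Prod.ext_iff, ht]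
      tauto
    rw [this]
  rw [e123, e1, e12, e13]
  exact submod_core P hP0 hPsum

end EntropySub


/-- A family of random variables on a common probability space: one (finite-valued)
random variable `secret` for the secret, and one random variable `share p` for the
share of each participant `p`. -/
structure Scheme (P : Type) [Fintype P] [DecidableEq P] where
  (Ω : Type)
  [mΩ : MeasurableSpace Ω]
  (μ : Measure Ω)
  [prob : IsProbabilityMeasure μ]
  (SecT : Type)
  [secFin : Fintype SecT]
  (ShT : P → Type)
  [shFin : ∀ p, Fintype (ShT p)]
  (secret : Ω → SecT)
  (share : (p : P) → Ω → ShT p)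
  (secret_meas : ∀ s : Set SecT, MeasurableSet (secret ⁻¹' s))
  (share_meas : ∀ p, ∀ s : Set (ShT p), MeasurableSet (share p ⁻¹' s))

namespace Scheme

variable {P : Type} [Fintype P] [DecidableEq P]

/-- `H(S)`: the entropy of the secret. -/
noncomputable def Hsec (S : Scheme P) : ℝ :=
  letI := S.mΩ; letI := S.secFin
  shannonEntropy S.μ S.secret

/-- `H(X)`: the joint entropy of the shares of the participants in `X`. -/
noncomputable def Hset (S : Scheme P) (X : Finset P) : ℝ :=
  letI := S.mΩ; letI := S.shFin
  shannonEntropy S.μ (fun ω => fun p : {y // y ∈ X} => S.share p.1 ω)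

/-- `H(X ∪ {S})`: the joint entropy of the shares of the participants in `X`
together with the secret. -/
noncomputable def HsetS (S : Scheme P) (X : Finset P) : ℝ :=
  letI := S.mΩ; letI := S.secFin; letI := S.shFin
  shannonEntropy S.μ (fun ω => ((fun p : {y // y ∈ X} => S.share p.1 ω), S.secret ω))

/-- The normalized entropy `h(X) = H(X)/H(S)`. -/
noncomputable def hset (S : Scheme P) (X : Finset P) : ℝ := S.Hset X / S.Hsec

/-- The conditional normalized entropy `h(X|Y) = h(X ∪ Y) − h(Y)`. -/
noncomputable def hcond (S : Scheme P) (X Y : Finset P) : ℝ :=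
  S.hset (X ∪ Y) - S.hset Y

/-- `Σ` is a perfect secret sharing scheme for the access structure `Γ`:
the conditional entropy `H(S|X) = H(X ∪ {S}) − H(X)` equals `0` for every
qualified set `X` and equals `H(S)` for every unqualified set `X`. -/
def IsPerfect (S : Scheme P) (Γ : Finset P → Prop) : Prop :=
  (∀ X : Finset P, Γ X → S.HsetS X - S.Hset X = 0) ∧
  (∀ X : Finset P, ¬ Γ X → S.HsetS X - S.Hset X = S.Hsec)

end Scheme

section EntropyEq
variable {Ω : Type} [MeasurableSpace Ω] (μ : Measure Ω) [IsProbabilityMeasure μ]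
variable {α β : Type} [Fintype α] [Fintype β]

lemma shannonEntropy_comp_eq (f : Ω → α) (φ : α → β) (ψ : β → α)
    (hψ : ∀ ω, ψ (φ (f ω)) = f ω)
    (hf : ∀ s : Set α, MeasurableSet (f ⁻¹' s)) :
    shannonEntropy μ (fun ω => φ (f ω)) = shannonEntropy μ f := by
  refine le_antisymm (shannonEntropy_comp_le μ f φ hf) ?_
  have hmf : ∀ s : Set β, MeasurableSet ((fun ω => φ (f ω)) ⁻¹' s) := fun s => hf (φ ⁻¹' s)
  have h1 : shannonEntropy μ f = shannonEntropy μ (fun ω => ψ (φ (f ω))) := by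
    congr 1
    exact funext fun ω => (hψ ω).symm
  rw [h1]
  exact shannonEntropy_comp_le μ (fun ω => φ (f ω)) ψ hmf

end EntropyEq

namespace Scheme

variable {P : Type} [Fintype P] [DecidableEq P]

/-- Restriction of a share assignment to a subset. -/
def restr (S : Scheme P) {X X' : Finset P} (h : X ⊆ X')
    (v : ∀ p : {y // y ∈ X'}, S.ShT p.1) : ∀ p : {y // y ∈ X}, S.ShT p.1 :=
  fun p => v ⟨p.1, h p.2⟩

lemma sharesMeas (S : Scheme P) (X : Finset P) :
    letI := S.mΩ; letI := S.shFin
    ∀ s : Set (∀ p : {y // y ∈ X}, S.ShT p.1),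
      MeasurableSet ((fun ω => fun p : {y // y ∈ X} => S.share p.1 ω) ⁻¹' s) := by
  letI := S.mΩ; letI := S.shFin
  apply meas_all
  intro v
  have : (fun ω => fun p : {y // y ∈ X} => S.share p.1 ω) ⁻¹' {v}
      = ⋂ p : {y // y ∈ X}, S.share p.1 ⁻¹' {v p} := by
    ext ω
    simp [funext_iff]
  rw [this]
  exact MeasurableSet.iInter fun p => S.share_meas p.1 {v p}

lemma Hset_mono (S : Scheme P) {X X' : Finset P} (h : X ⊆ X') :
    S.Hset X ≤ S.Hset X' := by
  letI := S.mΩ; letI := S.shFin; haveI := S.prob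
  exact shannonEntropy_comp_le S.μ
    (fun ω => fun p : {y // y ∈ X'} => S.share p.1 ω) (S.restr h) (S.sharesMeas X')

lemma HsetS_mono (S : Scheme P) {X X' : Finset P} (h : X ⊆ X') :
    S.HsetS X ≤ S.HsetS X' := by
  letI := S.mΩ; letI := S.shFin; letI := S.secFin; haveI := S.prob
  exact shannonEntropy_comp_le S.μ
    (fun ω => ((fun p : {y // y ∈ X'} => S.share p.1 ω), S.secret ω))
    (fun q => (S.restr h q.1, q.2))
    (meas_pair' _ _ (S.sharesMeas X') S.secret_meas)

lemma Hset_le_HsetS (S : Scheme P) (X : Finset P) : S.Hset X ≤ S.HsetS X := by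
  letI := S.mΩ; letI := S.shFin; letI := S.secFin; haveI := S.prob
  exact shannonEntropy_comp_le S.μ
    (fun ω => ((fun p : {y // y ∈ X} => S.share p.1 ω), S.secret ω))
    Prod.fst
    (meas_pair' _ _ (S.sharesMeas X) S.secret_meas)

lemma Hset_submod (S : Scheme P) (U V : Finset P) :
    S.Hset (U ∪ V) + S.Hset (U ∩ V) ≤ S.Hset U + S.Hset V := by
  classical
  letI := S.mΩ; letI := S.shFin; haveI := S.prob
  set f := fun ω => fun p : {y // y ∈ U ∩ V} => S.share p.1 ω with hf
  set g := fun ω => fun p : {y // y ∈ U} => S.share p.1 ω with hg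
  set k := fun ω => fun p : {y // y ∈ V} => S.share p.1 ω with hk
  set w := fun ω => fun p : {y // y ∈ U ∪ V} => S.share p.1 ω with hw
  have hsub := shannonEntropy_submodular S.μ f g k
    (S.sharesMeas (U ∩ V)) (S.sharesMeas U) (S.sharesMeas V)
  have e123 : shannonEntropy S.μ (fun ω => (f ω, g ω, k ω)) = S.Hset (U ∪ V) := by
    have := shannonEntropy_comp_eq S.μ w
      (fun v => (S.restr Finset.inter_subset_union v,
        S.restr Finset.subset_union_left v, S.restr Finset.subset_union_right v))
      (fun q => fun p : {y // y ∈ U ∪ V} =>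
        if hp : p.1 ∈ U then q.2.1 ⟨p.1, hp⟩
        else q.2.2 ⟨p.1, (Finset.mem_union.1 p.2).resolve_left hp⟩)
      (fun ω => by
        funext p
        by_cases hp : p.1 ∈ U <;> simp [hp, restr, hw])
      (S.sharesMeas (U ∪ V))
    exact this
  have e12 : shannonEntropy S.μ (fun ω => (f ω, g ω)) = S.Hset U := by
    have := shannonEntropy_comp_eq S.μ g
      (fun v => (S.restr (Finset.inter_subset_left : U ∩ V ⊆ U) v, v))
      (fun q => q.2)
      (fun ω => rfl)
      (S.sharesMeas U)
    exact this
  have e13 : shannonEntropy S.μ (fun ω => (f ω, k ω)) = S.Hset V := by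
    have := shannonEntropy_comp_eq S.μ k
      (fun v => (S.restr (Finset.inter_subset_right : U ∩ V ⊆ V) v, v))
      (fun q => q.2)
      (fun ω => rfl)
      (S.sharesMeas V)
    exact this
  have e1 : shannonEntropy S.μ f = S.Hset (U ∩ V) := rfl
  rw [e123, e12, e13, e1] at hsub
  exact hsub

end Scheme

lemma Scheme.key {P : Type} [Fintype P] [DecidableEq P] (S : Scheme P)
    (Γ : Finset P → Prop) (hperf : S.IsPerfect Γ) (hpos : 0 < S.Hsec)
    (X Y W : Finset P) (b : P) (hbY : b ∈ Y) (hXW : X ⊆ W) (hbW : b ∉ W)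
    (h1 : ¬ Γ (insert b X)) (h2 : Γ (Y ∪ X)) (h3 : ¬ Γ W) (h4 : Γ (insert b W)) :
    2 ≤ S.hcond Y X := by
  obtain ⟨hq, hu⟩ := hperf
  have A1 : S.Hset (insert b X) + S.Hsec ≤ S.Hset (Y ∪ X) := by
    have e2 := hq _ h2
    have e1 := hu _ h1
    have m : S.HsetS (insert b X) ≤ S.HsetS (Y ∪ X) := by
      refine S.HsetS_mono ?_
      intro p hp
      rcases Finset.mem_insert.1 hp with h | h
      · exact h ▸ Finset.mem_union_left _ hbY
      · exact Finset.mem_union_right _ h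
    have m2 : S.Hset (Y ∪ X) ≤ S.HsetS (Y ∪ X) := S.Hset_le_HsetS _
    linarith
  have A3 : S.Hset W + S.Hsec ≤ S.Hset (insert b W) := by
    have e4 := hq _ h4
    have e3 := hu _ h3
    have m : S.HsetS W ≤ S.HsetS (insert b W) := S.HsetS_mono (Finset.subset_insert b W)
    have m2 : S.Hset (insert b W) ≤ S.HsetS (insert b W) := S.Hset_le_HsetS _
    linarith
  have A2 : S.Hset (insert b W) + S.Hset X ≤ S.Hset W + S.Hset (insert b X) := by
    have hsub := S.Hset_submod W (insert b X)
    have hU : W ∪ insert b X = insert b W := by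
      ext p
      simp only [Finset.mem_union, Finset.mem_insert]
      constructor
      · rintro (h | rfl | h)
        · exact Or.inr h
        · exact Or.inl rfl
        · exact Or.inr (hXW h)
      · rintro (rfl | h)
        · exact Or.inr (Or.inl rfl)
        · exact Or.inl h
    have hI : W ∩ insert b X = X := by
      ext p
      simp only [Finset.mem_inter, Finset.mem_insert]
      constructor
      · rintro ⟨hw, rfl | h⟩
        · exact absurd hw hbW
        · exact h
      · exact fun h => ⟨hXW h, Or.inr h⟩
    rw [hU, hI] at hsub
    linarith
  have total : S.Hset X + 2 * S.Hsec ≤ S.Hset (Y ∪ X) := by linarith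
  have hc : S.hcond Y X = (S.Hset (Y ∪ X) - S.Hset X) / S.Hsec := by
    unfold Scheme.hcond Scheme.hset
    ring
  rw [hc, le_div_iff₀ hpos]
  linarith


/-- The four Vamos pairs `A = {v₁,v₂}`, `B = {v₃,v₄}`, `C = {v₅,v₆}`, `D = {v₇,v₈}`,
where participant `vᵢ` is represented by `(i-1 : Fin 8)`. -/
def pairA : Finset (Fin 8) := {0, 1}
def pairB : Finset (Fin 8) := {2, 3}
def pairC : Finset (Fin 8) := {4, 5}
def pairD : Finset (Fin 8) := {6, 7}

/-- `X` is one of the four Vamos pairs. -/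
def IsVamosPair (X : Finset (Fin 8)) : Prop :=
  X = pairA ∨ X = pairB ∨ X = pairC ∨ X = pairD

/-- The dependent sets of the Vamos matroid: the five special four-element sets
`AB`, `AC`, `BC`, `BD`, `CD`, and all sets with at least five elements. -/
def VamosDep (X : Finset (Fin 8)) : Prop :=
  X = pairA ∪ pairB ∨ X = pairA ∪ pairC ∨ X = pairB ∪ pairC ∨
    X = pairB ∪ pairD ∨ X = pairC ∪ pairD ∨ 5 ≤ X.card

/-- The circuits of the Vamos matroid: minimal dependent sets. -/
def VamosCircuit (X : Finset (Fin 8)) : Prop :=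
  VamosDep X ∧ ∀ Y ⊂ X, ¬ VamosDep Y

/-- The access structure `Γₓ` induced by the Vamos matroid with dealer `x`
(the dealer is regarded as a participant who is individually qualified):
a set is qualified iff it contains a minimal qualified set, the minimal
qualified sets being `{x}` and the sets `M ⊆ Q \ {x}` with `M ∪ {x}` a circuit. -/
def VamosQualified (x : Fin 8) (Y : Finset (Fin 8)) : Prop :=
  x ∈ Y ∨ ∃ M ⊆ Y, x ∉ M ∧ VamosCircuit (insert x M)

/-- `λ = (max₁≤ᵢ≤₈ h({vᵢ})) − 1`. -/
noncomputable def Scheme.lam (S : Scheme (Fin 8)) : ℝ :=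
  (Finset.univ.sup' Finset.univ_nonempty fun i : Fin 8 => S.hset {i}) - 1

/-- The information rate `ρ(Σ) = min₁≤ᵢ≤₈ H(S)/H(vᵢ)` of a scheme. -/
noncomputable def Scheme.rho (S : Scheme (Fin 8)) : ℝ :=
  Finset.univ.inf' Finset.univ_nonempty fun i : Fin 8 => S.Hsec / S.Hset {i}

instance : DecidablePred VamosDep := fun X => by unfold VamosDep; infer_instance
instance : DecidablePred VamosCircuit := fun X => by unfold VamosCircuit; infer_instance
instance (x : Fin 8) : DecidablePred (VamosQualified x) := fun Y => by
  unfold VamosQualified; infer_instance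

lemma not_qual_of (x : Fin 8) (Z : Finset (Fin 8)) (hx : x ∉ Z)
    (hcard : (insert x Z).card ≤ 4)
    (h : ¬ pairA ∪ pairB ⊆ insert x Z ∧ ¬ pairA ∪ pairC ⊆ insert x Z ∧
      ¬ pairB ∪ pairC ⊆ insert x Z ∧ ¬ pairB ∪ pairD ⊆ insert x Z ∧
      ¬ pairC ∪ pairD ⊆ insert x Z) :
    ¬ VamosQualified x Z := by
  rintro (hmem | ⟨M, hMZ, hxM, hdep, -⟩)
  · exact hx hmem
  · have hsub : insert x M ⊆ insert x Z := Finset.insert_subset_insert x hMZ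
    obtain ⟨h1, h2, h3, h4, h5⟩ := h
    have hcard2 : (insert x M).card ≤ 4 :=
      le_trans (Finset.card_le_card hsub) hcard
    rcases hdep with e | e | e | e | e | hc
    · exact h1 (e ▸ hsub)
    · exact h2 (e ▸ hsub)
    · exact h3 (e ▸ hsub)
    · exact h4 (e ▸ hsub)
    · exact h5 (e ▸ hsub)
    · omega

lemma qual_of (x : Fin 8) (Z M : Finset (Fin 8)) (hM : M ⊆ Z) (hxM : x ∉ M)
    (hcard : (insert x M).card = 5)
    (h : ¬ pairA ∪ pairB ⊆ insert x M ∧ ¬ pairA ∪ pairC ⊆ insert x M ∧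
      ¬ pairB ∪ pairC ⊆ insert x M ∧ ¬ pairB ∪ pairD ⊆ insert x M ∧
      ¬ pairC ∪ pairD ⊆ insert x M) :
    VamosQualified x Z := by
  refine Or.inr ⟨M, hM, hxM,
    Or.inr (Or.inr (Or.inr (Or.inr (Or.inr (le_of_eq hcard.symm))))), ?_⟩
  intro Y hY
  obtain ⟨h1, h2, h3, h4, h5⟩ := h
  have hYsub : Y ⊆ insert x M := hY.subset
  have hYcard : Y.card < 5 := hcard ▸ Finset.card_lt_card hY
  rintro (rfl | rfl | rfl | rfl | rfl | hc)
  · exact h1 hYsub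
  · exact h2 hYsub
  · exact h3 hYsub
  · exact h4 hYsub
  · exact h5 hYsub
  · omega


/-- If `X`, `Y` are distinct Vamos pairs with `X ∪ Y` independent in the Vamos
matroid and the dealer is not a member of `X`, then `2 ≤ h(Y|X)`. -/
theorem two_le_hcond (x : Fin 8)
    (S : Scheme (Fin 8)) (hperf : S.IsPerfect (VamosQualified x)) (hpos : 0 < S.Hsec)
    (X Y : Finset (Fin 8)) (hX : IsVamosPair X) (hY : IsVamosPair Y) (hne : X ≠ Y)
    (hindep : ¬ VamosDep (X ∪ Y)) (hx : x ∉ X) :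
    2 ≤ S.hcond Y X := by
  have hcase : (X = pairA ∧ Y = pairD) ∨ (X = pairD ∧ Y = pairA) := by
    rcases hX with rfl | rfl | rfl | rfl <;> rcases hY with rfl | rfl | rfl | rfl <;>
      first
        | exact Or.inl ⟨rfl, rfl⟩
        | exact Or.inr ⟨rfl, rfl⟩
        | exact absurd rfl hne
        | exact absurd (by decide) hindep
  rcases hcase with ⟨rfl, rfl⟩ | ⟨rfl, rfl⟩
  · fin_cases x
    · exact absurd (by decide) hx
    · exact absurd (by decide) hx
    · refine S.key _ hperf hpos pairA pairD ({0,1,6} : Finset (Fin 8)) 7 ?_ ?_ ?_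
        (not_qual_of _ _ ?_ ?_ ?_)
        (qual_of _ _ _ (Finset.Subset.refl _) ?_ ?_ ?_)
        (not_qual_of _ _ ?_ ?_ ?_)
        (qual_of _ _ _ (Finset.Subset.refl _) ?_ ?_ ?_) <;> decide
    · refine S.key _ hperf hpos pairA pairD ({0,1,6} : Finset (Fin 8)) 7 ?_ ?_ ?_
        (not_qual_of _ _ ?_ ?_ ?_)
        (qual_of _ _ _ (Finset.Subset.refl _) ?_ ?_ ?_)
        (not_qual_of _ _ ?_ ?_ ?_)
        (qual_of _ _ _ (Finset.Subset.refl _) ?_ ?_ ?_) <;> decide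
    · refine S.key _ hperf hpos pairA pairD ({0,1,6} : Finset (Fin 8)) 7 ?_ ?_ ?_
        (not_qual_of _ _ ?_ ?_ ?_)
        (qual_of _ _ _ (Finset.Subset.refl _) ?_ ?_ ?_)
        (not_qual_of _ _ ?_ ?_ ?_)
        (qual_of _ _ _ (Finset.Subset.refl _) ?_ ?_ ?_) <;> decide
    · refine S.key _ hperf hpos pairA pairD ({0,1,6} : Finset (Fin 8)) 7 ?_ ?_ ?_
        (not_qual_of _ _ ?_ ?_ ?_)
        (qual_of _ _ _ (Finset.Subset.refl _) ?_ ?_ ?_)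
        (not_qual_of _ _ ?_ ?_ ?_)
        (qual_of _ _ _ (Finset.Subset.refl _) ?_ ?_ ?_) <;> decide
    · refine S.key _ hperf hpos pairA pairD ({0,1,2} : Finset (Fin 8)) 7 ?_ ?_ ?_
        (not_qual_of _ _ ?_ ?_ ?_)
        (Or.inl ?_)
        (not_qual_of _ _ ?_ ?_ ?_)
        (qual_of _ _ _ (Finset.Subset.refl _) ?_ ?_ ?_) <;> decide
    · refine S.key _ hperf hpos pairA pairD ({0,1,2} : Finset (Fin 8)) 6 ?_ ?_ ?_
        (not_qual_of _ _ ?_ ?_ ?_)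
        (Or.inl ?_)
        (not_qual_of _ _ ?_ ?_ ?_)
        (qual_of _ _ _ (Finset.Subset.refl _) ?_ ?_ ?_) <;> decide
  · fin_cases x
    · refine S.key _ hperf hpos pairD pairA ({2,6,7} : Finset (Fin 8)) 1 ?_ ?_ ?_
        (not_qual_of _ _ ?_ ?_ ?_)
        (Or.inl ?_)
        (not_qual_of _ _ ?_ ?_ ?_)
        (qual_of _ _ _ (Finset.Subset.refl _) ?_ ?_ ?_) <;> decide
    · refine S.key _ hperf hpos pairD pairA ({2,6,7} : Finset (Fin 8)) 0 ?_ ?_ ?_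
        (not_qual_of _ _ ?_ ?_ ?_)
        (Or.inl ?_)
        (not_qual_of _ _ ?_ ?_ ?_)
        (qual_of _ _ _ (Finset.Subset.refl _) ?_ ?_ ?_) <;> decide
    · refine S.key _ hperf hpos pairD pairA ({0,6,7} : Finset (Fin 8)) 1 ?_ ?_ ?_
        (not_qual_of _ _ ?_ ?_ ?_)
        (qual_of _ _ _ (Finset.Subset.refl _) ?_ ?_ ?_)
        (not_qual_of _ _ ?_ ?_ ?_)
        (qual_of _ _ _ (Finset.Subset.refl _) ?_ ?_ ?_) <;> decide
    · refine S.key _ hperf hpos pairD pairA ({0,6,7} : Finset (Fin 8)) 1 ?_ ?_ ?_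
        (not_qual_of _ _ ?_ ?_ ?_)
        (qual_of _ _ _ (Finset.Subset.refl _) ?_ ?_ ?_)
        (not_qual_of _ _ ?_ ?_ ?_)
        (qual_of _ _ _ (Finset.Subset.refl _) ?_ ?_ ?_) <;> decide
    · refine S.key _ hperf hpos pairD pairA ({0,6,7} : Finset (Fin 8)) 1 ?_ ?_ ?_
        (not_qual_of _ _ ?_ ?_ ?_)
        (qual_of _ _ _ (Finset.Subset.refl _) ?_ ?_ ?_)
        (not_qual_of _ _ ?_ ?_ ?_)
        (qual_of _ _ _ (Finset.Subset.refl _) ?_ ?_ ?_) <;> decide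
    · refine S.key _ hperf hpos pairD pairA ({0,6,7} : Finset (Fin 8)) 1 ?_ ?_ ?_
        (not_qual_of _ _ ?_ ?_ ?_)
        (qual_of _ _ _ (Finset.Subset.refl _) ?_ ?_ ?_)
        (not_qual_of _ _ ?_ ?_ ?_)
        (qual_of _ _ _ (Finset.Subset.refl _) ?_ ?_ ?_) <;> decide
    · exact absurd (by decide) hx
    · exact absurd (by decide) hx
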